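/- There exists a 6-point pseudo 4-metric space (X′, d′) such that (X′, d′) ∈ C_{4,|·|}^1 but (X′, d′) ∉ V_4^m for every integer m ≥ 1. Concretely, one may take X′ = {x_1,…,x_5, a} and d′ : (X′)^4 → ℝ defined by d′(y_1,y_2,y_3,y_4) = 1 if y_1, y_2, y_3, y_4 are all distinct and one of them equals a, and d′(y_1,y_2,y_3,y_4) = 0 otherwise: this (X′, d′) is a 1-dimensional coboundary 4-metric, yet there is no m and no map g : X′ → ℝ^m with d′(y_1,…,y_4) = vol_3(g(y_1),…,g(y_4)) for all y_1,…,y_4 ∈ X′. -/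

import Mathlib

open scoped BigOperators

/-- An alternating real-valued function on `j`-tuples of `X`
(a `(j-1)`-dimensional chain on the complete complex on `X`). -/
def AltChain {X : Type*} {j : ℕ} (α : (Fin j → X) → ℝ) : Prop :=
  ∀ (π : Equiv.Perm (Fin j)) (x : Fin j → X),
    α (x ∘ π) = ((Equiv.Perm.sign π : ℤ) : ℝ) * α x

/-- The boundary operator: `(∂α)(y₁,…,y_j) = ∑_{x ∈ X} α(x, y₁, …, y_j)`. -/
noncomputable def bdry {X : Type*} [Fintype X] {j : ℕ}
    (α : (Fin (j + 1) → X) → ℝ) : (Fin j → X) → ℝ :=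
  fun y => ∑ x : X, α (Fin.cons x y)

/-- The elementary chain `1_t`: value `sign π` on the reordering of `t` by `π`,
and `0` on all other tuples. -/
noncomputable def unitChain {X : Type*} [DecidableEq X] {j : ℕ} (t : Fin j → X) :
    (Fin j → X) → ℝ :=
  fun s => ∑ π : Equiv.Perm (Fin j),
    if s = t ∘ π then ((Equiv.Perm.sign π : ℤ) : ℝ) else 0

/-- The coboundary operator:
`(δf)(x₁,…,x_{j+2}) = ∑ᵢ (-1)^(i+1) f(x₁,…,x̂ᵢ,…,x_{j+2})` (`0`-indexed sign `(-1)^i`). -/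
noncomputable def cobdry {X : Type*} {j : ℕ}
    (f : (Fin (j + 1) → X) → ℝ) : (Fin (j + 2) → X) → ℝ :=
  fun x => ∑ i : Fin (j + 2), (-1 : ℝ) ^ (i : ℕ) * f (x ∘ i.succAbove)

/-- A pseudo metric of arity `K` (a pseudo `K`-metric): nonnegative, vanishing on
non-injective tuples, permutation invariant, satisfying the simplex inequality. -/
structure IsPseudoMetric {X : Type*} (K : ℕ) (d : (Fin K → X) → ℝ) : Prop where
  nonneg : ∀ x, 0 ≤ d x
  eq_zero : ∀ x, ¬ Function.Injective x → d x = 0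
  perm : ∀ (π : Equiv.Perm (Fin K)) (x), d (x ∘ π) = d x
  simplex : ∀ (x : Fin K → X) (y : X),
    d x ≤ ∑ i : Fin K, d (Function.update x i y)

/-- A strong pseudo metric of arity `k + 1` (a strong pseudo `(k+1)`-metric).
The strong simplex inequality `d t ≤ ∑_τ |α(τ)| * d(τ)` (with the sum over
`(k+1)`-element subsets `τ` of `X`, each evaluated on any fixed ordering of `τ`)
is stated in the equivalent form `(k+1)! * d t ≤ ∑_s |α(s)| * d(s)` with the sum
over all `(k+1)`-tuples `s`: since `α` is alternating and `d` is permutation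
invariant, the summand depends only on the underlying set of `s` (it vanishes on
tuples with repeated entries), and each `(k+1)`-element subset has exactly
`(k+1)!` orderings. -/
structure IsStrongPseudoMetric {X : Type*} [Fintype X] [DecidableEq X] (k : ℕ)
    (d : (Fin (k + 1) → X) → ℝ) : Prop where
  nonneg : ∀ x, 0 ≤ d x
  eq_zero : ∀ x, ¬ Function.Injective x → d x = 0
  perm : ∀ (π : Equiv.Perm (Fin (k + 1))) (x), d (x ∘ π) = d x
  strong_simplex : ∀ t : Fin (k + 1) → X, Function.Injective t →
    ∀ α : (Fin (k + 1) → X) → ℝ, AltChain α → bdry α = bdry (unitChain t) →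
      ((k + 1).factorial : ℝ) * d t ≤ ∑ s : Fin (k + 1) → X, |α s| * d s

/-- `(X, d)` is a coboundary metric of arity `k + 2` in `m` dimensions with respect
to the norm `ν` on `ℝ^m`: there are chains `f 1, …, f m` on `(k+1)`-tuples (i.e.
`(k+2)-2`-dimensional chains for arity `k+2`) whose simultaneous coboundary
realizes `d` on injective tuples, and `d` vanishes on non-injective tuples. -/
def IsCoboundaryMetric {X : Type*} (k m : ℕ) (ν : (Fin m → ℝ) → ℝ)
    (d : (Fin (k + 2) → X) → ℝ) : Prop :=
  ∃ f : Fin m → ((Fin (k + 1) → X) → ℝ),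
    (∀ i, AltChain (f i)) ∧
    (∀ x, Function.Injective x → d x = ν (fun i => cobdry (f i) x)) ∧
    (∀ x, ¬ Function.Injective x → d x = 0)

/-- `ν` is a norm on `ℝ^m`. -/
structure IsNorm {m : ℕ} (ν : (Fin m → ℝ) → ℝ) : Prop where
  nonneg : ∀ x, 0 ≤ ν x
  eq_zero_iff : ∀ x, ν x = 0 ↔ x = 0
  homog : ∀ (c : ℝ) (x), ν (c • x) = |c| * ν x
  triangle : ∀ x y, ν (x + y) ≤ ν x + ν y

/-- The `ℓ_p` norm on `ℝ^m` for real `p`. -/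
noncomputable def lpNorm (p : ℝ) {m : ℕ} (x : Fin m → ℝ) : ℝ :=
  (∑ i, |x i| ^ p) ^ (1 / p)

/-- The `ℓ_1` norm on `ℝ^m`. -/
noncomputable def l1Norm {m : ℕ} (x : Fin m → ℝ) : ℝ := ∑ i, |x i|

/-- The `ℓ_2` (Euclidean) norm on `ℝ^m`. -/
noncomputable def l2Norm {m : ℕ} (x : Fin m → ℝ) : ℝ := Real.sqrt (∑ i, x i ^ 2)

/-- The `ℓ_∞` norm on `ℝ^m` (the sup norm, which is the norm of `Fin m → ℝ`). -/
noncomputable def linfNorm {m : ℕ} (x : Fin m → ℝ) : ℝ := ‖x‖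

/- The apex extension of `d` (of arity `K`), with the apex being
`none : Option X` (a new element not in `X`): on an injective `(K+1)`-tuple
containing the apex in position `i` it is `d` of the tuple with position `i`
removed, and it is `0` on all other tuples. -/
open Classical in
noncomputable def apexExt {X : Type*} {K : ℕ} (d : (Fin K → X) → ℝ) :
    (Fin (K + 1) → Option X) → ℝ := fun x =>
  if h : Function.Injective x ∧ ∃ i, x i = none then
    d (fun j =>
      Option.get (x ((Classical.choose h.2).succAbove j))
        (by
          rw [Option.isSome_iff_ne_none]
          intro hnone
          exact Fin.succAbove_ne (Classical.choose h.2) j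
            (h.1 (hnone.trans (Classical.choose_spec h.2).symm))))
  else 0

/-- The `K`-dimensional volume of the simplex with vertices `y 0, …, y K` in `ℝ^m`:
`(1/K!) * √(det (AᵀA))` where `A` is the `m × K` matrix with columns
`y i - y 0`, `i = 1, …, K`. -/
noncomputable def simplexVolume {m K : ℕ} (y : Fin (K + 1) → (Fin m → ℝ)) : ℝ :=
  (1 / (K.factorial : ℝ)) *
    Real.sqrt
      (Matrix.det
        (Matrix.of fun i j : Fin K =>
          ∑ l : Fin m, (y i.succ l - y 0 l) * (y j.succ l - y 0 l)))

open Classical in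
/-- The 4-pseudometric on the 6-point set `Fin 6` (with apex `a = 5`): value `1`
on quadruples of distinct points one of which is the apex, `0` otherwise. -/
noncomputable def dApexSix : (Fin 4 → Fin 6) → ℝ := fun y =>
  if Function.Injective y ∧ ∃ i, y i = 5 then 1 else 0


set_option synthInstance.maxSize 2000
set_option maxRecDepth 100000

/-! ### Auxiliary material for `stmt_18` -/

section Stmt18Aux

open Matrix

/-! #### Part 1: pseudometric -/

lemma dApex_nonneg (x : Fin 4 → Fin 6) : 0 ≤ dApexSix x := by
  simp only [dApexSix]; split <;> norm_num

lemma update_inj {x : Fin 4 → Fin 6} (hx : Function.Injective x) {y : Fin 6}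
    (hy : ∀ j, x j ≠ y) (i : Fin 4) : Function.Injective (Function.update x i y) := by
  intro a b hab
  by_cases ha : a = i <;> by_cases hb : b = i
  · rw [ha, hb]
  · rw [ha, Function.update_self, Function.update_of_ne hb] at hab
    exact absurd hab.symm (hy b)
  · rw [hb, Function.update_self, Function.update_of_ne ha] at hab
    exact absurd hab (hy a)
  · rw [Function.update_of_ne ha, Function.update_of_ne hb] at hab
    exact hx hab

lemma part1_eqzero : ∀ x, ¬ Function.Injective x → dApexSix x = 0 := by
  intro x hx
  simp only [dApexSix]
  exact if_neg (fun h => hx h.1)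

lemma part1_perm : ∀ (π : Equiv.Perm (Fin 4)) (x : Fin 4 → Fin 6),
    dApexSix (x ∘ π) = dApexSix x := by
  intro π x
  have hiff : (Function.Injective (x ∘ π) ∧ ∃ i, (x ∘ π) i = 5)
      ↔ (Function.Injective x ∧ ∃ i, x i = 5) := by
    constructor
    · rintro ⟨h1, i, hi⟩
      refine ⟨?_, π i, hi⟩
      have := h1.comp π.symm.injective
      have he : (x ∘ π) ∘ π.symm = x := by funext j; simp
      rwa [he] at this
    · rintro ⟨h1, i, hi⟩
      exact ⟨h1.comp π.injective, π.symm i, by simp [hi]⟩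
  simp only [dApexSix]
  exact if_congr hiff rfl rfl

lemma part1_simplex : ∀ (x : Fin 4 → Fin 6) (y : Fin 6),
    dApexSix x ≤ ∑ i : Fin 4, dApexSix (Function.update x i y) := by
  intro x y
  by_cases h : Function.Injective x ∧ ∃ i, x i = 5
  · obtain ⟨hinj, i₀, hi₀⟩ := h
    obtain ⟨i, hgood⟩ : ∃ i, (Function.Injective (Function.update x i y)
        ∧ ∃ j, Function.update x i y j = 5) := by
      by_cases hy : ∃ j, x j = y
      · obtain ⟨j, hj⟩ := hy
        refine ⟨j, ?_⟩
        rw [← hj, Function.update_eq_self]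
        exact ⟨hinj, i₀, hi₀⟩
      · push_neg at hy
        obtain ⟨i, hi⟩ : ∃ i : Fin 4, i ≠ i₀ := by
          rcases eq_or_ne i₀ 0 with h' | h'
          · exact ⟨1, by rw [h']; decide⟩
          · exact ⟨0, Ne.symm h'⟩
        refine ⟨i, update_inj hinj hy i, i₀, ?_⟩
        rw [Function.update_of_ne (Ne.symm hi)]
        exact hi₀
    have h1 : dApexSix x = dApexSix (Function.update x i y) := by
      simp only [dApexSix]
      rw [if_pos (⟨hinj, i₀, hi₀⟩ : Function.Injective x ∧ ∃ i, x i = 5), if_pos hgood]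
    rw [h1]
    exact Finset.single_le_sum (f := fun i => dApexSix (Function.update x i y))
      (fun j _ => dApex_nonneg _) (Finset.mem_univ i)
  · have h0 : dApexSix x = 0 := by simp only [dApexSix]; exact if_neg h
    rw [h0]
    exact Finset.sum_nonneg fun j _ => dApex_nonneg _

/-! #### Part 2: coboundary metric -/

def sZ (a b : Fin 6) : ℤ := if a < b then 1 else if b < a then -1 else 0
def eZ (a : Fin 6) : ℤ := if a = 5 then 1 else 0
def fZ3 (a b c : Fin 6) : ℤ := eZ a * sZ b c - eZ b * sZ a c + eZ c * sZ a b

lemma keyZ : ∀ a b c d : Fin 6, a ≠ b → a ≠ c → a ≠ d → b ≠ c → b ≠ d → c ≠ d →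
    |fZ3 b c d - fZ3 a c d + fZ3 a b d - fZ3 a b c|
      = (if a = 5 ∨ b = 5 ∨ c = 5 ∨ d = 5 then 1 else 0 : ℤ) := by decide

lemma fZ3_swap01 : ∀ a b c : Fin 6, fZ3 b a c = - fZ3 a b c := by decide
lemma fZ3_swap12 : ∀ a b c : Fin 6, fZ3 a c b = - fZ3 a b c := by decide
lemma fZ3_swap02 : ∀ a b c : Fin 6, fZ3 c b a = - fZ3 a b c := by decide

noncomputable def fR : (Fin 3 → Fin 6) → ℝ := fun z => ((fZ3 (z 0) (z 1) (z 2) : ℤ) : ℝ)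

lemma fR_swap01' (x : Fin 3 → Fin 6) : fR (x ∘ Equiv.swap (0 : Fin 3) 1) = - fR x := by
  simp only [fR, Function.comp_apply, Equiv.swap_apply_left, Equiv.swap_apply_right,
    Equiv.swap_apply_of_ne_of_ne (show (2 : Fin 3) ≠ 0 by decide) (show (2 : Fin 3) ≠ 1 by decide)]
  rw [fZ3_swap01]
  push_cast
  ring

lemma fR_swap02' (x : Fin 3 → Fin 6) : fR (x ∘ Equiv.swap (0 : Fin 3) 2) = - fR x := by
  simp only [fR, Function.comp_apply, Equiv.swap_apply_left, Equiv.swap_apply_right,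
    Equiv.swap_apply_of_ne_of_ne (show (1 : Fin 3) ≠ 0 by decide) (show (1 : Fin 3) ≠ 2 by decide)]
  rw [fZ3_swap02]
  push_cast
  ring

lemma fR_swap12' (x : Fin 3 → Fin 6) : fR (x ∘ Equiv.swap (1 : Fin 3) 2) = - fR x := by
  simp only [fR, Function.comp_apply, Equiv.swap_apply_left, Equiv.swap_apply_right,
    Equiv.swap_apply_of_ne_of_ne (show (0 : Fin 3) ≠ 1 by decide) (show (0 : Fin 3) ≠ 2 by decide)]
  rw [fZ3_swap12]
  push_cast
  ring

set_option linter.unreachableTactic false in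
set_option linter.unusedTactic false in
lemma fR_swap : ∀ (i j : Fin 3), i ≠ j → ∀ x : Fin 3 → Fin 6,
    fR (x ∘ Equiv.swap i j) = - fR x := by
  intro i j hij x
  fin_cases i <;> fin_cases j <;>
    first
      | exact absurd rfl hij
      | exact fR_swap01' x
      | exact fR_swap02' x
      | exact fR_swap12' x
      | (rw [Equiv.swap_comm]; first
          | exact fR_swap01' x
          | exact fR_swap02' x
          | exact fR_swap12' x)

lemma cobdry_fR (x : Fin 4 → Fin 6) :
    cobdry fR x = ((fZ3 (x 1) (x 2) (x 3) - fZ3 (x 0) (x 2) (x 3)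
      + fZ3 (x 0) (x 1) (x 3) - fZ3 (x 0) (x 1) (x 2) : ℤ) : ℝ) := by
  have h0 : fR (x ∘ (0 : Fin 4).succAbove) = ((fZ3 (x 1) (x 2) (x 3) : ℤ) : ℝ) := rfl
  have h1 : fR (x ∘ (1 : Fin 4).succAbove) = ((fZ3 (x 0) (x 2) (x 3) : ℤ) : ℝ) := rfl
  have h2 : fR (x ∘ (2 : Fin 4).succAbove) = ((fZ3 (x 0) (x 1) (x 3) : ℤ) : ℝ) := rfl
  have h3 : fR (x ∘ (3 : Fin 4).succAbove) = ((fZ3 (x 0) (x 1) (x 2) : ℤ) : ℝ) := rfl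
  rw [cobdry, Fin.sum_univ_four, h0, h1, h2, h3]
  norm_num [show ((0 : Fin 4) : ℕ) = 0 from rfl, show ((1 : Fin 4) : ℕ) = 1 from rfl,
    show ((2 : Fin 4) : ℕ) = 2 from rfl, show ((3 : Fin 4) : ℕ) = 3 from rfl]
  push_cast
  ring

lemma fR_alt : AltChain fR := by
  intro π
  refine Equiv.Perm.swap_induction_on π ?_ ?_
  · intro x
    simp
  · intro σ i j hij ih x
    have hcomp : x ∘ ⇑(Equiv.swap i j * σ) = (x ∘ ⇑(Equiv.swap i j)) ∘ ⇑σ := by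
      funext a; simp [Equiv.Perm.mul_apply]
    rw [hcomp, ih (x ∘ ⇑(Equiv.swap i j)), fR_swap i j hij x,
      Equiv.Perm.sign_mul, Equiv.Perm.sign_swap hij]
    push_cast
    ring

lemma cobdry_abs (x : Fin 4 → Fin 6) (hx : Function.Injective x) :
    dApexSix x = |cobdry fR x| := by
  rw [cobdry_fR, ← Int.cast_abs,
    keyZ (x 0) (x 1) (x 2) (x 3) (hx.ne (by decide)) (hx.ne (by decide))
      (hx.ne (by decide)) (hx.ne (by decide)) (hx.ne (by decide)) (hx.ne (by decide))]
  simp only [dApexSix]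
  by_cases h5 : x 0 = 5 ∨ x 1 = 5 ∨ x 2 = 5 ∨ x 3 = 5
  · have hex : ∃ i, x i = 5 := by
      rcases h5 with h | h | h | h
      exacts [⟨0, h⟩, ⟨1, h⟩, ⟨2, h⟩, ⟨3, h⟩]
    rw [if_pos h5, if_pos (⟨hx, hex⟩ : Function.Injective x ∧ ∃ i, x i = 5)]
    norm_num
  · rw [if_neg h5, if_neg]
    · norm_num
    · rintro ⟨-, i, hi⟩
      apply h5
      fin_cases i
      · exact Or.inl hi
      · exact Or.inr (Or.inl hi)
      · exact Or.inr (Or.inr (Or.inl hi))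
      · exact Or.inr (Or.inr (Or.inr hi))

/-! #### Part 3: not a volume metric -/

def BMat {m : ℕ} (u v w : Fin m → ℝ) : Matrix (Fin 3) (Fin m) ℝ := Matrix.of ![u, v, w]

noncomputable def gram3 {m : ℕ} (u v w : Fin m → ℝ) : ℝ :=
  ((BMat u v w) * (BMat u v w)ᵀ).det

lemma gram3_nonneg {m : ℕ} (u v w : Fin m → ℝ) : 0 ≤ gram3 u v w := by
  have h : ((BMat u v w) * (BMat u v w)ᵀ).PosSemidef := by
    have := Matrix.posSemidef_self_mul_conjTranspose (BMat u v w)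
    rwa [Matrix.conjTranspose_eq_transpose_of_trivial] at this
  rw [gram3, h.isHermitian.det_eq_prod_eigenvalues]
  exact Finset.prod_nonneg fun i _ => by simpa using h.eigenvalues_nonneg i

lemma gram3_dep {m : ℕ} {u v w : Fin m → ℝ} (h : gram3 u v w = 0) :
    ∃ c : Fin 3 → ℝ, c ≠ 0 ∧ ∀ l, c 0 * u l + c 1 * v l + c 2 * w l = 0 := by
  obtain ⟨c, hc0, hc⟩ := (Matrix.exists_mulVec_eq_zero_iff).2 h
  refine ⟨c, hc0, ?_⟩
  have hBt : (BMat u v w)ᵀ *ᵥ c = 0 := by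
    have h1 : (BMat u v w) *ᵥ ((BMat u v w)ᵀ *ᵥ c) = 0 := by
      rw [Matrix.mulVec_mulVec]; exact hc
    have h2 : ((BMat u v w)ᵀ *ᵥ c) ⬝ᵥ ((BMat u v w)ᵀ *ᵥ c) = 0 := by
      rw [Matrix.mulVec_transpose]
      rw [← Matrix.dotProduct_mulVec]
      rw [← Matrix.mulVec_transpose, h1, dotProduct_zero]
    exact dotProduct_self_eq_zero.mp h2
  intro l
  have h3 := congrFun hBt l
  simp [BMat, Matrix.mulVec, dotProduct, Fin.sum_univ_three] at h3
  linarith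

lemma gram3_zero_of_dep {m : ℕ} {u v w : Fin m → ℝ} (c : Fin 3 → ℝ) (hc0 : c ≠ 0)
    (h : ∀ l, c 0 * u l + c 1 * v l + c 2 * w l = 0) : gram3 u v w = 0 := by
  apply (Matrix.exists_mulVec_eq_zero_iff).1
  refine ⟨c, hc0, ?_⟩
  have hBt : (BMat u v w)ᵀ *ᵥ c = 0 := by
    funext l
    have := h l
    simp [BMat, Matrix.mulVec, dotProduct, Fin.sum_univ_three]
    linarith
  rw [← Matrix.mulVec_mulVec, hBt, Matrix.mulVec_zero]

set_option linter.unnecessarySeqFocus false in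
lemma gram3_transform {m : ℕ} (u v w : Fin m → ℝ) (a₁ b₁ a₂ b₂ a₃ b₃ : ℝ) :
    gram3 (fun l => a₁ * u l + b₁ * v l) (fun l => a₂ * u l + b₂ * v l)
      (fun l => w l + a₃ * u l + b₃ * v l)
      = (a₁ * b₂ - b₁ * a₂) ^ 2 * gram3 u v w := by
  set M : Matrix (Fin 3) (Fin 3) ℝ := !![a₁, b₁, 0; a₂, b₂, 0; a₃, b₃, 1] with hM
  have hB : BMat (fun l => a₁ * u l + b₁ * v l) (fun l => a₂ * u l + b₂ * v l)
      (fun l => w l + a₃ * u l + b₃ * v l) = M * BMat u v w := by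
    ext i l
    fin_cases i <;> simp [BMat, hM, Matrix.mul_apply, Fin.sum_univ_three] <;> ring
  have hMdet : M.det = a₁ * b₂ - b₁ * a₂ := by
    simp [hM, Matrix.det_fin_three]
  rw [gram3, gram3, hB, Matrix.transpose_mul, Matrix.mul_assoc,
    ← Matrix.mul_assoc (BMat u v w), ← Matrix.mul_assoc,
    Matrix.det_mul, Matrix.det_mul, Matrix.det_transpose, hMdet]
  ring

set_option linter.unnecessarySeqFocus false in
lemma vol_eq' {m : ℕ} (p0 p1 p2 p3 : Fin m → ℝ) :
    simplexVolume ![p0, p1, p2, p3]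
      = 1 / 6 * Real.sqrt (gram3 (fun l => p1 l - p0 l) (fun l => p2 l - p0 l)
          (fun l => p3 l - p0 l)) := by
  have hmat : (Matrix.of fun i j : Fin 3 =>
      ∑ l : Fin m, (![p0, p1, p2, p3] i.succ l - ![p0, p1, p2, p3] 0 l) *
        (![p0, p1, p2, p3] j.succ l - ![p0, p1, p2, p3] 0 l))
      = (BMat (fun l => p1 l - p0 l) (fun l => p2 l - p0 l) (fun l => p3 l - p0 l))
        * (BMat (fun l => p1 l - p0 l) (fun l => p2 l - p0 l) (fun l => p3 l - p0 l))ᵀ := by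
    ext i j
    rw [Matrix.mul_apply]
    fin_cases i <;> fin_cases j <;>
      simp [BMat, Fin.sum_univ_three, Fin.succ]
  rw [simplexVolume, gram3, hmat]
  norm_num [Nat.factorial]

lemma sqrt36 {G : ℝ} (h : (1 : ℝ) = 1 / 6 * Real.sqrt G) : G = 36 := by
  have h6 : Real.sqrt G = 6 := by linarith
  have hpos : 0 < Real.sqrt G := by rw [h6]; norm_num
  have hG := Real.sqrt_pos.mp hpos
  nlinarith [Real.sq_sqrt hG.le]

lemma sqrt0 {G : ℝ} (hG : 0 ≤ G) (h : (0 : ℝ) = 1 / 6 * Real.sqrt G) : G = 0 := by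
  have h6 : Real.sqrt G = 0 := by linarith
  nlinarith [Real.sq_sqrt hG]

lemma finalContra {x3 y3 x4 y4 : ℝ} (h1 : y3 ^ 2 = 1) (h2 : x3 ^ 2 = 1)
    (h3 : (1 - x3 - y3) ^ 2 = 1) (h4 : y4 ^ 2 = 1) (h5 : x4 ^ 2 = 1)
    (h6 : (1 - x4 - y4) ^ 2 = 1) (h7 : (x3 * y4 - x4 * y3) ^ 2 = 1) : False := by
  have e1 := mul_eq_zero.mp (show (x3 - 1) * (x3 + 1) = 0 by linear_combination h2)
  have e2 := mul_eq_zero.mp (show (y3 - 1) * (y3 + 1) = 0 by linear_combination h1)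
  have e3 := mul_eq_zero.mp (show (x4 - 1) * (x4 + 1) = 0 by linear_combination h5)
  have e4 := mul_eq_zero.mp (show (y4 - 1) * (y4 + 1) = 0 by linear_combination h4)
  have g1 : x3 = 1 ∨ x3 = -1 := by
    rcases e1 with h | h; exacts [Or.inl (by linarith), Or.inr (by linarith)]
  have g2 : y3 = 1 ∨ y3 = -1 := by
    rcases e2 with h | h; exacts [Or.inl (by linarith), Or.inr (by linarith)]
  have g3 : x4 = 1 ∨ x4 = -1 := by
    rcases e3 with h | h; exacts [Or.inl (by linarith), Or.inr (by linarith)]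
  have g4 : y4 = 1 ∨ y4 = -1 := by
    rcases e4 with h | h; exacts [Or.inl (by linarith), Or.inr (by linarith)]
  rcases g1 with rfl | rfl <;> rcases g2 with rfl | rfl <;>
    rcases g3 with rfl | rfl <;> rcases g4 with rfl | rfl <;>
    norm_num at *

lemma extract36 {m : ℕ} {u v c w : Fin m → ℝ} (h36 : gram3 u v c = 36)
    (h0 : gram3 u v w = 0) : ∃ x y : ℝ, ∀ l, w l = x * u l + y * v l := by
  obtain ⟨co, hco, hcomb⟩ := gram3_dep h0
  have hc2 : co 2 ≠ 0 := by
    intro h2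
    have hz : gram3 u v c = 0 := by
      apply gram3_zero_of_dep co hco
      intro l
      have h := hcomb l
      rw [h2] at h ⊢
      linarith
    rw [hz] at h36; norm_num at h36
  refine ⟨-(co 0) / co 2, -(co 1) / co 2, fun l => ?_⟩
  have h := hcomb l
  field_simp
  linear_combination h

lemma master {m : ℕ} (u v c w3 w4 : Fin m → ℝ) (x3 y3 x4 y4 : ℝ)
    (hw3 : ∀ l, w3 l = x3 * u l + y3 * v l) (hw4 : ∀ l, w4 l = x4 * u l + y4 * v l)
    (h012 : gram3 u v c = 36)
    (h013 : gram3 u w3 c = 36) (h023 : gram3 v w3 c = 36)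
    (h123 : gram3 (fun l => v l - u l) (fun l => w3 l - u l) (fun l => c l - u l) = 36)
    (h014 : gram3 u w4 c = 36) (h024 : gram3 v w4 c = 36)
    (h124 : gram3 (fun l => v l - u l) (fun l => w4 l - u l) (fun l => c l - u l) = 36)
    (h034 : gram3 w3 w4 c = 36) : False := by
  have eu : (fun l => (1 : ℝ) * u l + 0 * v l) = u := by funext l; ring
  have ev : (fun l => (0 : ℝ) * u l + 1 * v l) = v := by funext l; ring
  have ec : (fun l => c l + (0 : ℝ) * u l + 0 * v l) = c := by funext l; ring
  have ew3 : (fun l => x3 * u l + y3 * v l) = w3 := (funext hw3).symm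
  have ew4 : (fun l => x4 * u l + y4 * v l) = w4 := (funext hw4).symm
  have evu : (fun l => (-1 : ℝ) * u l + 1 * v l) = fun l => v l - u l := by funext l; ring
  have ecu : (fun l => c l + (-1 : ℝ) * u l + 0 * v l) = fun l => c l - u l := by
    funext l; ring
  have ew3u : (fun l => (x3 - 1) * u l + y3 * v l) = fun l => w3 l - u l := by
    funext l; rw [hw3 l]; ring
  have ew4u : (fun l => (x4 - 1) * u l + y4 * v l) = fun l => w4 l - u l := by
    funext l; rw [hw4 l]; ring
  have t1 := gram3_transform u v c 1 0 x3 y3 0 0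
  rw [eu, ew3, ec, h012, h013] at t1
  have t2 := gram3_transform u v c 0 1 x3 y3 0 0
  rw [ev, ew3, ec, h012, h023] at t2
  have t3 := gram3_transform u v c (-1) 1 (x3 - 1) y3 (-1) 0
  rw [evu, ew3u, ecu, h012, h123] at t3
  have t4 := gram3_transform u v c 1 0 x4 y4 0 0
  rw [eu, ew4, ec, h012, h014] at t4
  have t5 := gram3_transform u v c 0 1 x4 y4 0 0
  rw [ev, ew4, ec, h012, h024] at t5
  have t6 := gram3_transform u v c (-1) 1 (x4 - 1) y4 (-1) 0
  rw [evu, ew4u, ecu, h012, h124] at t6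
  have t7 := gram3_transform u v c x3 y3 x4 y4 0 0
  rw [ew3, ew4, ec, h012, h034] at t7
  have p1 : y3 ^ 2 = 1 := by linear_combination (-1/36 : ℝ) * t1
  have p2 : x3 ^ 2 = 1 := by linear_combination (-1/36 : ℝ) * t2
  have p3 : (1 - x3 - y3) ^ 2 = 1 := by linear_combination (-1/36 : ℝ) * t3
  have p4 : y4 ^ 2 = 1 := by linear_combination (-1/36 : ℝ) * t4
  have p5 : x4 ^ 2 = 1 := by linear_combination (-1/36 : ℝ) * t5
  have p6 : (1 - x4 - y4) ^ 2 = 1 := by linear_combination (-1/36 : ℝ) * t6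
  have p7 : (x3 * y4 - x4 * y3) ^ 2 = 1 := by linear_combination (-1/36 : ℝ) * t7
  exact finalContra p1 p2 p3 p4 p5 p6 p7

set_option linter.unnecessarySeqFocus false in
lemma part3 : ∀ m : ℕ, 1 ≤ m →
    ¬ ∃ g : Fin 6 → (Fin m → ℝ),
        ∀ y : Fin 4 → Fin 6,
          dApexSix y = simplexVolume (m := m) (K := 3) fun i => g (y i) := by
  intro m _ hex
  obtain ⟨g, hg⟩ := hex
  have H : ∀ a b c : Fin 6, Function.Injective ![a, b, c, (5 : Fin 6)] →
      gram3 (fun l => g b l - g a l) (fun l => g c l - g a l)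
        (fun l => g 5 l - g a l) = 36 := by
    intro a b c hinj
    have h := hg ![a, b, c, 5]
    have hy : (fun i => g (![a, b, c, (5 : Fin 6)] i)) = ![g a, g b, g c, g 5] := by
      funext i; fin_cases i <;> rfl
    rw [hy, vol_eq'] at h
    have hd : dApexSix ![a, b, c, (5 : Fin 6)] = 1 := by
      rw [dApexSix]
      exact if_pos ⟨hinj, ⟨3, rfl⟩⟩
    rw [hd] at h
    exact sqrt36 h
  have H0 : ∀ w : Fin 6, w ≠ 5 → Function.Injective ![0, 1, 2, w] →
      gram3 (fun l => g 1 l - g 0 l) (fun l => g 2 l - g 0 l)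
        (fun l => g w l - g 0 l) = 0 := by
    intro w hw hinj
    have h := hg ![0, 1, 2, w]
    have hy : (fun i => g (![(0 : Fin 6), 1, 2, w] i)) = ![g 0, g 1, g 2, g w] := by
      funext i; fin_cases i <;> rfl
    rw [hy, vol_eq'] at h
    have hd : dApexSix ![0, 1, 2, w] = 0 := by
      rw [dApexSix]
      apply if_neg
      rintro ⟨hinj2, i, hi⟩
      fin_cases i <;> simp at hi <;> first | exact absurd hi (by decide) | exact hw hi
    rw [hd] at h
    exact sqrt0 (gram3_nonneg _ _ _) h
  have h012 := H 0 1 2 (by decide)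
  obtain ⟨x3, y3, hw3⟩ := extract36 h012 (H0 3 (by decide) (by decide))
  obtain ⟨x4, y4, hw4⟩ := extract36 h012 (H0 4 (by decide) (by decide))
  apply master (fun l => g 1 l - g 0 l) (fun l => g 2 l - g 0 l)
    (fun l => g 5 l - g 0 l) (fun l => g 3 l - g 0 l) (fun l => g 4 l - g 0 l)
    x3 y3 x4 y4 hw3 hw4 h012
  · exact H 0 1 3 (by decide)
  · exact H 0 2 3 (by decide)
  · have h := H 1 2 3 (by decide)
    have e1 : (fun l => g 2 l - g 1 l)
        = (fun l => (g 2 l - g 0 l) - (g 1 l - g 0 l)) := by funext l; ring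
    have e2 : (fun l => g 3 l - g 1 l)
        = (fun l => (g 3 l - g 0 l) - (g 1 l - g 0 l)) := by funext l; ring
    have e3 : (fun l => g 5 l - g 1 l)
        = (fun l => (g 5 l - g 0 l) - (g 1 l - g 0 l)) := by funext l; ring
    rw [e1, e2, e3] at h
    exact h
  · exact H 0 1 4 (by decide)
  · exact H 0 2 4 (by decide)
  · have h := H 1 2 4 (by decide)
    have e1 : (fun l => g 2 l - g 1 l)
        = (fun l => (g 2 l - g 0 l) - (g 1 l - g 0 l)) := by funext l; ring
    have e2 : (fun l => g 4 l - g 1 l)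
        = (fun l => (g 4 l - g 0 l) - (g 1 l - g 0 l)) := by funext l; ring
    have e3 : (fun l => g 5 l - g 1 l)
        = (fun l => (g 5 l - g 0 l) - (g 1 l - g 0 l)) := by funext l; ring
    rw [e1, e2, e3] at h
    exact h
  · exact H 0 3 4 (by decide)

end Stmt18Aux

/-- `(Fin 6, dApexSix)` is a 6-point pseudo 4-metric space lying in
`C_{4,|·|}^1` (a 1-dimensional coboundary 4-metric) that is not an
`m`-dimensional volume 4-metric for any `m ≥ 1`. -/
theorem stmt_18 :
    IsPseudoMetric 4 dApexSix ∧
      IsCoboundaryMetric 2 1 (fun v => |v 0|) dApexSix ∧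
        ∀ m : ℕ, 1 ≤ m →
          ¬ ∃ g : Fin 6 → (Fin m → ℝ),
              ∀ y : Fin 4 → Fin 6,
                dApexSix y = simplexVolume (m := m) (K := 3) fun i => g (y i) := by
  refine ⟨⟨fun x => dApex_nonneg x, part1_eqzero, part1_perm, part1_simplex⟩, ?_, part3⟩
  exact ⟨fun _ => fR, fun _ => fR_alt, fun x hx => cobdry_abs x hx, part1_eqzero⟩
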